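/- arXiv:2603.20761 — 2 statements merged into one kernel-verified Lean document; each statement's English description precedes it below -/
import Mathlib

section
/- Let V₁ and V₂ be isometries defining irreducible quantum Markov chains with the same environment dimension k and system dimensions d₁ and d₂, with stationary states ρ₁ˢˢ, ρ₂ˢˢ and Kraus operators K_{1,j}, K_{2,j}. Define the linear map T₁₂ on d₁×d₂ complex matrices by T₁₂(X) = V₁ᴴ (X ⊗ 1_k) V₂ = Σ_j K_{1,j}ᴴ X K_{2,j}. Then the following are equivalent: (1) T₁₂ admits an eigenvalue of modulus one, i.e. there exist c ∈ ℂ with |c| = 1 and a nonzero d₁×d₂ matrix F with T₁₂(F) = cF; (2) d₁ = d₂ and there exist a unitary d₁×d₂ matrix W and c ∈ ℂ with |c| = 1 such that W K_{2,j} = c K_{1,j} W for all j and W ρ₂ˢˢ = ρ₁ˢˢ W; (3) d₁ = d₂ and there exist a unitary d₁×d₂ matrix W and c ∈ ℂ with |c| = 1 such that (W ⊗ 1_k) V₂ = c V₁ W. Moreover, in cases (2) and (3) one has T₁₂(W) = cW. -/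
open Matrix Filter
open scoped Kronecker ComplexConjugate ComplexOrder

noncomputable section

namespace QMCPaper

/-- The `j`-th block (Kraus operator style) of a `(d₁·k)×d₂` matrix. -/
def blk {d₁ d₂ k : ℕ} (V : Matrix (Fin d₁ × Fin k) (Fin d₂) ℂ) (j : Fin k) :
    Matrix (Fin d₁) (Fin d₂) ℂ :=
  fun a b => V (a, j) b

/-- The Kraus operators of a QMC isometry. -/
def kraus {d k : ℕ} (V : Matrix (Fin d × Fin k) (Fin d) ℂ) (j : Fin k) :
    Matrix (Fin d) (Fin d) ℂ :=
  blk V j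

/-- The transition channel `T_V(X) = Vᴴ (X ⊗ 1_k) V = Σ_j K_jᴴ X K_j`. -/
def chan {d k : ℕ} (V : Matrix (Fin d × Fin k) (Fin d) ℂ)
    (X : Matrix (Fin d) (Fin d) ℂ) : Matrix (Fin d) (Fin d) ℂ :=
  ∑ j : Fin k, (kraus V j)ᴴ * X * kraus V j

/-- The predual channel `T_{V*}(ρ) = Σ_j K_j ρ K_jᴴ`. -/
def predual {d k : ℕ} (V : Matrix (Fin d × Fin k) (Fin d) ℂ)
    (ρ : Matrix (Fin d) (Fin d) ℂ) : Matrix (Fin d) (Fin d) ℂ :=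
  ∑ j : Fin k, kraus V j * ρ * (kraus V j)ᴴ

/-- A state: positive semidefinite matrix of trace one. -/
def IsState {d : ℕ} (ρ : Matrix (Fin d) (Fin d) ℂ) : Prop :=
  ρ.PosSemidef ∧ ρ.trace = 1

/-- `V` is an isometry defining an irreducible QMC with (unique, faithful) stationary
state `ρss`. -/
def IsIrreducible {d k : ℕ} (V : Matrix (Fin d × Fin k) (Fin d) ℂ)
    (ρss : Matrix (Fin d) (Fin d) ℂ) : Prop :=
  Vᴴ * V = 1 ∧ IsState ρss ∧ predual V ρss = ρss ∧ ρss.PosDef ∧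
    ∀ ρ, IsState ρ → predual V ρ = ρ → ρ = ρss

/-- For a word `i = (i_0, …, i_{n-1})`, the operator `K_i = K_{i_{n-1}} ⋯ K_{i_0}`. -/
def krausWord {d k : ℕ} (V : Matrix (Fin d × Fin k) (Fin d) ℂ) {n : ℕ}
    (i : Fin n → Fin k) : Matrix (Fin d) (Fin d) ℂ :=
  ((List.ofFn i).reverse.map (kraus V)).prod

/-- The output state at time `n` with initial system state `ρ`:
its `(i,j)` entry is `tr(K_i ρ K_jᴴ)`. -/
def outState {d k : ℕ} (V : Matrix (Fin d × Fin k) (Fin d) ℂ)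
    (ρ : Matrix (Fin d) (Fin d) ℂ) (n : ℕ) :
    Matrix (Fin n → Fin k) (Fin n → Fin k) ℂ :=
  fun i j => (krausWord V i * ρ * (krausWord V j)ᴴ).trace

/-- Output equivalence (with given initial states): equality of all output states. -/
def OutputEquiv {d₁ d₂ k : ℕ}
    (V₁ : Matrix (Fin d₁ × Fin k) (Fin d₁) ℂ) (ρ₁ : Matrix (Fin d₁) (Fin d₁) ℂ)
    (V₂ : Matrix (Fin d₂ × Fin k) (Fin d₂) ℂ) (ρ₂ : Matrix (Fin d₂) (Fin d₂) ℂ) : Prop :=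
  ∀ n : ℕ, 1 ≤ n → ∀ i j : Fin n → Fin k,
    (krausWord V₁ i * ρ₁ * (krausWord V₁ j)ᴴ).trace =
      (krausWord V₂ i * ρ₂ * (krausWord V₂ j)ᴴ).trace

/-- A (possibly rectangular) unitary matrix. -/
def IsUnitaryMat {d₁ d₂ : ℕ} (W : Matrix (Fin d₁) (Fin d₂) ℂ) : Prop :=
  Wᴴ * W = 1 ∧ W * Wᴴ = 1

end QMCPaper

namespace QMCPaper

/-- The map `T₁₂(X) = V₁ᴴ (X ⊗ 1_k) V₂` between two QMCs. -/
def chan12 {d₁ d₂ k : ℕ} (V₁ : Matrix (Fin d₁ × Fin k) (Fin d₁) ℂ)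
    (V₂ : Matrix (Fin d₂ × Fin k) (Fin d₂) ℂ)
    (X : Matrix (Fin d₁) (Fin d₂) ℂ) : Matrix (Fin d₁) (Fin d₂) ℂ :=
  V₁ᴴ * (X ⊗ₖ (1 : Matrix (Fin k) (Fin k) ℂ)) * V₂

/-! ### auxiliary lemmas -/

variable {d₁ d₂ e₁ e₂ d n k : ℕ}

lemma kron_one_mul_apply (X : Matrix (Fin d₁) (Fin d₂) ℂ)
    (V : Matrix (Fin d₂ × Fin k) (Fin e₂) ℂ) (a : Fin d₁) (j : Fin k) (b : Fin e₂) :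
    ((X ⊗ₖ (1 : Matrix (Fin k) (Fin k) ℂ)) * V) (a, j) b = (X * blk V j) a b := by
  simp only [Matrix.mul_apply, Fintype.sum_prod_type, kroneckerMap_apply, Matrix.one_apply, blk]
  rw [Finset.sum_comm]
  simp [Finset.sum_ite_eq, mul_ite, ite_mul, mul_assoc]

lemma mul_apply_blk (V : Matrix (Fin d₁ × Fin k) (Fin d₂) ℂ)
    (Y : Matrix (Fin d₂) (Fin e₂) ℂ) (a : Fin d₁) (j : Fin k) (b : Fin e₂) :
    (V * Y) (a, j) b = (blk V j * Y) a b := by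
  simp [Matrix.mul_apply, blk]

lemma kron_one_conjTranspose (X : Matrix (Fin d₁) (Fin d₂) ℂ) :
    (X ⊗ₖ (1 : Matrix (Fin k) (Fin k) ℂ))ᴴ = Xᴴ ⊗ₖ (1 : Matrix (Fin k) (Fin k) ℂ) := by
  ext ⟨a, j⟩ ⟨b, j'⟩
  simp only [conjTranspose_apply, kroneckerMap_apply, Matrix.one_apply, star_mul',
    apply_ite (starRingEnd ℂ), star_one, star_zero]
  by_cases h : j = j' <;> simp [h, eq_comm, mul_comm]

lemma master (V : Matrix (Fin d₁ × Fin k) (Fin e₁) ℂ) (V' : Matrix (Fin d₂ × Fin k) (Fin e₂) ℂ)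
    (X : Matrix (Fin d₁) (Fin d₂) ℂ) :
    Vᴴ * (X ⊗ₖ (1 : Matrix (Fin k) (Fin k) ℂ)) * V' = ∑ j, (blk V j)ᴴ * X * blk V' j := by
  rw [Matrix.mul_assoc]
  ext b b'
  rw [Matrix.mul_apply]
  simp only [Finset.sum_apply, Matrix.sum_apply]
  rw [Fintype.sum_prod_type]
  rw [Finset.sum_comm]
  apply Finset.sum_congr rfl
  intro j _
  rw [Matrix.mul_assoc, Matrix.mul_apply (M := (blk V j)ᴴ)]
  apply Finset.sum_congr rfl
  intro a _
  rw [kron_one_mul_apply]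
  simp [conjTranspose_apply, blk]

lemma psd_diag_nonneg {M : Matrix (Fin d) (Fin d) ℂ} (hM : M.PosSemidef) (i : Fin d) :
    0 ≤ M i i := by
  simpa [Matrix.mulVec, dotProduct, Pi.star_apply, Pi.single_apply,
    apply_ite (star : ℂ → ℂ), ite_mul, mul_ite] using hM.dotProduct_mulVec_nonneg (Pi.single i 1)

lemma psd_trace_nonneg {M : Matrix (Fin d) (Fin d) ℂ} (hM : M.PosSemidef) :
    0 ≤ M.trace :=
  Finset.sum_nonneg fun i _ => psd_diag_nonneg hM i

lemma psd_trace_zero {M : Matrix (Fin d) (Fin d) ℂ} (hM : M.PosSemidef)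
    (h : M.trace = 0) : M = 0 := by
  obtain ⟨B, rfl⟩ : ∃ B : Matrix (Fin d) (Fin d) ℂ, M = Bᴴ * B := by
    open scoped MatrixOrder in exact CStarAlgebra.nonneg_iff_eq_star_mul_self.mp hM.nonneg
  rw [conjTranspose_mul_self_eq_zero (A := B)]
  have key : Matrix.trace (Bᴴ * B) = ((∑ j, ∑ i, Complex.normSq (B i j) : ℝ) : ℂ) := by
    push_cast
    simp only [Matrix.trace, Matrix.diag, Matrix.mul_apply, conjTranspose_apply,
      Complex.normSq_eq_conj_mul_self]
    rfl
  have : ∑ j, ∑ i, Complex.normSq (B i j) = 0 := by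
    have := key.symm.trans h
    exact_mod_cast this
  ext i j
  have h1 : ∀ j ∈ Finset.univ, (0:ℝ) ≤ ∑ i, Complex.normSq (B i j) :=
    fun j _ => Finset.sum_nonneg fun i _ => Complex.normSq_nonneg _
  have h2 := (Finset.sum_eq_zero_iff_of_nonneg h1).mp this j (Finset.mem_univ j)
  have h3 := (Finset.sum_eq_zero_iff_of_nonneg
    (fun i _ => Complex.normSq_nonneg (B i j))).mp h2 i (Finset.mem_univ i)
  simpa using Complex.normSq_eq_zero.mp h3

lemma zero_of_mul_posdef {ρ : Matrix (Fin d) (Fin d) ℂ} {B : Matrix (Fin n) (Fin d) ℂ}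
    (hρ : ρ.PosDef) (h : B * ρ * Bᴴ = 0) : B = 0 := by
  ext i a
  simp only [Matrix.zero_apply]
  by_contra hBi
  have hx : (fun b => star (B i b)) ≠ 0 := by
    intro h0
    exact hBi (by simpa using star_eq_zero.mpr (congrFun h0 a))
  have hq := hρ.dotProduct_mulVec_pos hx
  have : star (fun b => star (B i b)) ⬝ᵥ ρ *ᵥ (fun b => star (B i b)) = (B * ρ * Bᴴ) i i := by
    simp [Matrix.mul_apply, dotProduct, Matrix.mulVec, Finset.sum_mul, mul_assoc,
      conjTranspose_apply]
    simp only [Finset.mul_sum]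
    exact Finset.sum_comm
  rw [this, h] at hq
  simp at hq

lemma psd_zero_of_trace_mul {ρ A : Matrix (Fin d) (Fin d) ℂ} (hρ : ρ.PosDef)
    (hA : A.PosSemidef) (h : (ρ * A).trace = 0) : A = 0 := by
  obtain ⟨B, rfl⟩ : ∃ B : Matrix (Fin d) (Fin d) ℂ, A = Bᴴ * B := by
    open scoped MatrixOrder in exact CStarAlgebra.nonneg_iff_eq_star_mul_self.mp hA.nonneg
  have h2 : (B * ρ * Bᴴ).trace = 0 := by
    rw [trace_mul_cycle, trace_mul_comm]
    exact h
  have h3 := psd_trace_zero (hρ.posSemidef.mul_mul_conjTranspose_same B) h2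
  rw [zero_of_mul_posdef hρ h3]
  simp

lemma psd_smul_real {M : Matrix (Fin d) (Fin d) ℂ} (hM : M.PosSemidef) {r : ℝ}
    (hr : 0 ≤ r) : ((r : ℂ) • M).PosSemidef := by
  constructor
  · rw [IsHermitian, conjTranspose_smul]
    simp [hM.1.eq, Complex.conj_ofReal]
  · exact (hM.smul (Complex.zero_le_real.mpr hr)).2

lemma dim_pos {ρ : Matrix (Fin d) (Fin d) ℂ} (h : ρ.trace = 1) : 0 < d := by
  rcases Nat.eq_zero_or_pos d with h0 | h0
  · subst h0; simp [Matrix.trace] at h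
  · exact h0

/-! ### channel lemmas -/

lemma chan12_eq_sum (V₁ : Matrix (Fin d₁ × Fin k) (Fin d₁) ℂ)
    (V₂ : Matrix (Fin d₂ × Fin k) (Fin d₂) ℂ) (X : Matrix (Fin d₁) (Fin d₂) ℂ) :
    chan12 V₁ V₂ X = ∑ j, (kraus V₁ j)ᴴ * X * kraus V₂ j :=
  master V₁ V₂ X

lemma sum_kraus (V : Matrix (Fin d × Fin k) (Fin d) ℂ) :
    ∑ j, (kraus V j)ᴴ * kraus V j = Vᴴ * V := by
  have := master V V (1 : Matrix (Fin d) (Fin d) ℂ)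
  rw [Matrix.one_kronecker_one] at this
  simp only [Matrix.mul_one, Matrix.one_mul] at this
  exact this.symm

lemma duality (V : Matrix (Fin d × Fin k) (Fin d) ℂ) (ρ X : Matrix (Fin d) (Fin d) ℂ) :
    (ρ * ∑ j, (kraus V j)ᴴ * X * kraus V j).trace = (predual V ρ * X).trace := by
  rw [Finset.mul_sum, trace_sum, predual, Finset.sum_mul, trace_sum]
  apply Finset.sum_congr rfl
  intro j _
  rw [← Matrix.mul_assoc, trace_mul_comm, ← Matrix.mul_assoc, ← Matrix.mul_assoc,
    trace_mul_comm, ← Matrix.mul_assoc]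

lemma kron_eq_iff_blocks (X : Matrix (Fin d₁) (Fin d₂) ℂ)
    (V₁ : Matrix (Fin d₁ × Fin k) (Fin d₁) ℂ) (V₂ : Matrix (Fin d₂ × Fin k) (Fin d₂) ℂ)
    (c : ℂ) :
    (X ⊗ₖ (1 : Matrix (Fin k) (Fin k) ℂ)) * V₂ = c • (V₁ * X) ↔
      ∀ j, X * kraus V₂ j = c • (kraus V₁ j * X) := by
  constructor
  · intro h j
    ext a b
    have h1 := congrFun (congrFun h (a, j)) b
    rw [kron_one_mul_apply] at h1
    show (X * blk V₂ j) a b = (c • (blk V₁ j * X)) a b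
    rw [h1, Matrix.smul_apply, Matrix.smul_apply, mul_apply_blk]
  · intro h
    ext ⟨a, j⟩ b
    rw [kron_one_mul_apply]
    show (X * kraus V₂ j) a b = (c • (V₁ * X)) (a, j) b
    rw [h j, Matrix.smul_apply, Matrix.smul_apply, mul_apply_blk]
    rfl

lemma chan12_conjTranspose (V₁ : Matrix (Fin d₁ × Fin k) (Fin d₁) ℂ)
    (V₂ : Matrix (Fin d₂ × Fin k) (Fin d₂) ℂ) (X : Matrix (Fin d₁) (Fin d₂) ℂ) :
    (chan12 V₁ V₂ X)ᴴ = chan12 V₂ V₁ Xᴴ := by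
  simp [chan12, conjTranspose_mul, kron_one_conjTranspose, Matrix.mul_assoc]


lemma norm_one_conj_mul {c : ℂ} (hc : ‖c‖ = 1) : star c * c = 1 := by
  have h1 : Complex.normSq c = 1 := by
    rw [Complex.normSq_eq_norm_sq, hc, one_pow]
  rw [show (star c) = (starRingEnd ℂ) c from rfl, ← Complex.normSq_eq_conj_mul_self, h1,
    Complex.ofReal_one]

lemma key {V₁ : Matrix (Fin d₁ × Fin k) (Fin d₁) ℂ} {V₂ : Matrix (Fin d₂ × Fin k) (Fin d₂) ℂ}
    {ρ₂ : Matrix (Fin d₂) (Fin d₂) ℂ} (hiso : V₁ᴴ * V₁ = 1) (hρ₂ : ρ₂.PosDef)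
    (hst : predual V₂ ρ₂ = ρ₂) {c : ℂ} {F : Matrix (Fin d₁) (Fin d₂) ℂ}
    (hc : ‖c‖ = 1) (hF : chan12 V₁ V₂ F = c • F) :
    (F ⊗ₖ (1 : Matrix (Fin k) (Fin k) ℂ)) * V₂ = c • (V₁ * F) := by
  have hcc : star c * c = 1 := norm_one_conj_mul hc
  set G := Fᴴ * F with hGdef
  set M := (F ⊗ₖ (1 : Matrix (Fin k) (Fin k) ℂ)) * V₂ - c • (V₁ * F) with hMdef
  have hadj : V₂ᴴ * (Fᴴ ⊗ₖ (1 : Matrix (Fin k) (Fin k) ℂ)) * V₁ = star c • Fᴴ := by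
    have h0 := chan12_conjTranspose V₁ V₂ F
    rw [hF, conjTranspose_smul] at h0
    exact h0.symm
  have hchan : V₁ᴴ * (F ⊗ₖ (1 : Matrix (Fin k) (Fin k) ℂ)) * V₂ = c • F := hF
  have hMH : Mᴴ = V₂ᴴ * (Fᴴ ⊗ₖ (1 : Matrix (Fin k) (Fin k) ℂ)) - star c • (Fᴴ * V₁ᴴ) := by
    rw [hMdef]
    simp [conjTranspose_sub, conjTranspose_mul, conjTranspose_smul, kron_one_conjTranspose]
  have t1 : (V₂ᴴ * (Fᴴ ⊗ₖ (1 : Matrix (Fin k) (Fin k) ℂ))) *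
      ((F ⊗ₖ (1 : Matrix (Fin k) (Fin k) ℂ)) * V₂)
      = V₂ᴴ * (G ⊗ₖ (1 : Matrix (Fin k) (Fin k) ℂ)) * V₂ := by
    rw [Matrix.mul_assoc, ← Matrix.mul_assoc (Fᴴ ⊗ₖ _), ← Matrix.mul_kronecker_mul,
      Matrix.one_mul, ← hGdef, ← Matrix.mul_assoc]
  have hcc' : c * star c = 1 := by rw [mul_comm]; exact hcc
  have t2 : (V₂ᴴ * (Fᴴ ⊗ₖ (1 : Matrix (Fin k) (Fin k) ℂ))) * (c • (V₁ * F)) = (c * star c) • G := by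
    rw [Matrix.mul_smul, ← Matrix.mul_assoc, hadj, Matrix.smul_mul, smul_smul, hGdef]
  have t3 : (star c • (Fᴴ * V₁ᴴ)) * ((F ⊗ₖ (1 : Matrix (Fin k) (Fin k) ℂ)) * V₂)
      = (star c * c) • G := by
    rw [Matrix.smul_mul, Matrix.mul_assoc Fᴴ, ← Matrix.mul_assoc V₁ᴴ, hchan,
      Matrix.mul_smul, smul_smul, hGdef]
  have t4 : (star c • (Fᴴ * V₁ᴴ)) * (c • (V₁ * F)) = (star c * c) • G := by
    rw [Matrix.smul_mul, Matrix.mul_smul, smul_smul, Matrix.mul_assoc Fᴴ,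
      ← Matrix.mul_assoc V₁ᴴ, hiso, Matrix.one_mul, hGdef]
  have expand : Mᴴ * M = V₂ᴴ * (G ⊗ₖ (1 : Matrix (Fin k) (Fin k) ℂ)) * V₂ - G := by
    rw [hMH, hMdef, Matrix.sub_mul, Matrix.mul_sub, Matrix.mul_sub, t1, t2, t3, t4,
      hcc, hcc', one_smul]
    abel
  have hPSD : (Mᴴ * M).PosSemidef := posSemidef_conjTranspose_mul_self M
  have htr : (ρ₂ * (Mᴴ * M)).trace = 0 := by
    rw [expand, Matrix.mul_sub, trace_sub,
      show V₂ᴴ * (G ⊗ₖ (1 : Matrix (Fin k) (Fin k) ℂ)) * V₂ = chan12 V₂ V₂ G from rfl,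
      chan12_eq_sum, duality V₂ ρ₂ G, hst, sub_self]
  have h0 : Mᴴ * M = 0 := psd_zero_of_trace_mul hρ₂ hPSD htr
  have hM0 : M = 0 := conjTranspose_mul_self_eq_zero.mp h0
  rw [hMdef] at hM0
  exact sub_eq_zero.mp hM0

lemma predual_smul (V : Matrix (Fin d × Fin k) (Fin d) ℂ) (c : ℂ)
    (ρ : Matrix (Fin d) (Fin d) ℂ) : predual V (c • ρ) = c • predual V ρ := by
  simp [predual, Matrix.mul_smul, Matrix.smul_mul, Finset.smul_sum]

lemma scalar_of_comm {V : Matrix (Fin d × Fin k) (Fin d) ℂ}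
    {ρ : Matrix (Fin d) (Fin d) ℂ} (h : IsIrreducible V ρ)
    {G : Matrix (Fin d) (Fin d) ℂ} (hG : G.PosSemidef) (hGne : G ≠ 0)
    (hcomm : ∀ j, G * kraus V j = kraus V j * G) :
    ∃ t : ℝ, 0 < t ∧ G = (t : ℂ) • 1 := by
  obtain ⟨v, t, ht0, hv0, hvt⟩ := hG.isHermitian.exists_eigenvector_of_ne_zero hGne
  have hρpd : ρ.PosDef := h.2.2.2.1
  set G' := G - (t : ℂ) • 1 with hG'def
  have hG'H : G'ᴴ = G' := by
    rw [hG'def, conjTranspose_sub, conjTranspose_smul, conjTranspose_one, hG.isHermitian.eq]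
    simp [Complex.conj_ofReal]
  have hcomm' : ∀ j, kraus V j * G' = G' * kraus V j := by
    intro j
    rw [hG'def, Matrix.mul_sub, Matrix.sub_mul, hcomm j, Matrix.mul_smul, Matrix.smul_mul,
      Matrix.mul_one, Matrix.one_mul]
  have hker : G' *ᵥ v = 0 := by
    rw [hG'def, Matrix.sub_mulVec, hvt]
    funext b
    simp [Matrix.smul_mulVec, Matrix.one_mulVec, Complex.real_smul]
  set σ := G' * ρ * G'ᴴ with hσdef
  have hσpsd : σ.PosSemidef := hρpd.posSemidef.mul_mul_conjTranspose_same G'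
  have hσfix : predual V σ = σ := by
    have step : ∀ j, kraus V j * σ * (kraus V j)ᴴ
        = G' * (kraus V j * ρ * (kraus V j)ᴴ) * G'ᴴ := by
      intro j
      have h1 : (kraus V j)ᴴ * G'ᴴ = G'ᴴ * (kraus V j)ᴴ := by
        rw [← conjTranspose_mul, ← conjTranspose_mul, hcomm' j]
      rw [hσdef]
      rw [show kraus V j * (G' * ρ * G'ᴴ) * (kraus V j)ᴴ
          = (kraus V j * G') * ρ * (G'ᴴ * (kraus V j)ᴴ) by
        simp only [Matrix.mul_assoc]]
      rw [hcomm' j, ← h1]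
      simp only [Matrix.mul_assoc]
    calc predual V σ = ∑ j, G' * (kraus V j * ρ * (kraus V j)ᴴ) * G'ᴴ :=
          Finset.sum_congr rfl fun j _ => step j
      _ = G' * (∑ j, kraus V j * ρ * (kraus V j)ᴴ) * G'ᴴ := by
          rw [Finset.mul_sum, Finset.sum_mul]
      _ = σ := by rw [show (∑ j, kraus V j * ρ * (kraus V j)ᴴ) = predual V ρ from rfl,
          h.2.2.1, hσdef]
  rcases eq_or_ne σ.trace 0 with hτ | hτ
  · have hσ0 : σ = 0 := psd_trace_zero hσpsd hτ
    have hG'0 : G' = 0 := by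
      refine zero_of_mul_posdef hρpd ?_
      rw [← hσdef]  -- σ = G' * ρ * G'ᴴ
      exact hσ0
    rw [hG'def] at hG'0
    have hGt : G = (t : ℂ) • 1 := sub_eq_zero.mp hG'0
    refine ⟨t, ?_, hGt⟩
    have hd : 0 < d := dim_pos h.2.1.2
    have hnn := psd_diag_nonneg hG ⟨0, hd⟩
    rw [hGt] at hnn
    have he : ((t : ℂ) • (1 : Matrix (Fin d) (Fin d) ℂ)) ⟨0, hd⟩ ⟨0, hd⟩ = (t : ℂ) := by
      simp [Matrix.one_apply]
    rw [he] at hnn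
    exact lt_of_le_of_ne (Complex.zero_le_real.mp hnn) (Ne.symm ht0)
  · exfalso
    have h0le : 0 ≤ σ.trace := psd_trace_nonneg hσpsd
    have him : σ.trace.im = 0 := by
      rw [Complex.le_def] at h0le
      simpa using h0le.2.symm
    have hre : 0 < σ.trace.re := by
      rw [Complex.le_def] at h0le
      rcases lt_or_eq_of_le (by simpa using h0le.1) with h' | h'
      · exact h'
      · exact absurd (Complex.ext h'.symm him) hτ
    set r := σ.trace.re with hrdef
    have hrtr : σ.trace = (r : ℂ) := by
      apply Complex.ext <;> simp [hrdef, him]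
    have hstate : IsState (((r⁻¹ : ℝ) : ℂ) • σ) := by
      constructor
      · exact psd_smul_real hσpsd (inv_nonneg.mpr hre.le)
      · rw [trace_smul, hrtr, smul_eq_mul]
        push_cast
        field_simp
    have hfix2 : predual V (((r⁻¹ : ℝ) : ℂ) • σ) = ((r⁻¹ : ℝ) : ℂ) • σ := by
      rw [predual_smul, hσfix]
    have heq := h.2.2.2.2 _ hstate hfix2
    have hσv : σ *ᵥ v = 0 := by
      rw [hσdef, hG'H, ← Matrix.mulVec_mulVec, ← Matrix.mulVec_mulVec, hker]
      simp
    have hρv : ρ *ᵥ v = 0 := by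
      rw [← heq, smul_mulVec, hσv, smul_zero]
    have hpos := hρpd.dotProduct_mulVec_pos hv0
    rw [hρv] at hpos
    simp at hpos

lemma main_forward {V₁ : Matrix (Fin d₁ × Fin k) (Fin d₁) ℂ} {ρ₁ : Matrix (Fin d₁) (Fin d₁) ℂ}
    {V₂ : Matrix (Fin d₂ × Fin k) (Fin d₂) ℂ} {ρ₂ : Matrix (Fin d₂) (Fin d₂) ℂ}
    (h₁ : IsIrreducible V₁ ρ₁) (h₂ : IsIrreducible V₂ ρ₂)
    {c : ℂ} {F : Matrix (Fin d₁) (Fin d₂) ℂ} (hc : ‖c‖ = 1) (hFne : F ≠ 0)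
    (hF : chan12 V₁ V₂ F = c • F) :
    d₁ = d₂ ∧ ∃ W : Matrix (Fin d₁) (Fin d₂) ℂ, IsUnitaryMat W ∧
      (∀ j, W * kraus V₂ j = c • (kraus V₁ j * W)) ∧ W * ρ₂ = ρ₁ * W := by
  have hcc : star c * c = 1 := norm_one_conj_mul hc
  have hcc' : c * star c = 1 := by rw [mul_comm]; exact hcc
  have hkron := key h₁.1 h₂.2.2.2.1 h₂.2.2.1 hc hF
  have hbl : ∀ j, F * kraus V₂ j = c • (kraus V₁ j * F) :=
    (kron_eq_iff_blocks F V₁ V₂ c).mp hkron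
  have hF' : chan12 V₂ V₁ Fᴴ = star c • Fᴴ := by
    have h0 := chan12_conjTranspose V₁ V₂ F
    rw [hF, conjTranspose_smul] at h0
    exact h0.symm
  have hc2 : ‖star c‖ = 1 := by
    rw [show (star c) = (starRingEnd ℂ) c from rfl, Complex.norm_conj]
    exact hc
  have hkron' := key h₂.1 h₁.2.2.2.1 h₁.2.2.1 hc2 hF'
  have hbl' : ∀ j, Fᴴ * kraus V₁ j = star c • (kraus V₂ j * Fᴴ) :=
    (kron_eq_iff_blocks Fᴴ V₂ V₁ (star c)).mp hkron'
  have hGcomm : ∀ j, (Fᴴ * F) * kraus V₂ j = kraus V₂ j * (Fᴴ * F) := by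
    intro j
    calc (Fᴴ * F) * kraus V₂ j = Fᴴ * (F * kraus V₂ j) := by rw [Matrix.mul_assoc]
      _ = Fᴴ * (c • (kraus V₁ j * F)) := by rw [hbl j]
      _ = c • (Fᴴ * kraus V₁ j * F) := by rw [Matrix.mul_smul, Matrix.mul_assoc]
      _ = c • ((star c • (kraus V₂ j * Fᴴ)) * F) := by rw [hbl' j]
      _ = (c * star c) • (kraus V₂ j * (Fᴴ * F)) := by
          rw [Matrix.smul_mul, smul_smul, Matrix.mul_assoc]
      _ = kraus V₂ j * (Fᴴ * F) := by rw [hcc', one_smul]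
  have hGpsd : (Fᴴ * F).PosSemidef := posSemidef_conjTranspose_mul_self F
  have hGne : (Fᴴ * F) ≠ 0 := fun h0 => hFne (conjTranspose_mul_self_eq_zero.mp h0)
  obtain ⟨μ, hμpos, hGμ⟩ := scalar_of_comm h₂ hGpsd hGne hGcomm
  have hHcomm : ∀ j, (F * Fᴴ) * kraus V₁ j = kraus V₁ j * (F * Fᴴ) := by
    intro j
    calc (F * Fᴴ) * kraus V₁ j = F * (Fᴴ * kraus V₁ j) := by rw [Matrix.mul_assoc]
      _ = F * (star c • (kraus V₂ j * Fᴴ)) := by rw [hbl' j]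
      _ = star c • (F * kraus V₂ j * Fᴴ) := by rw [Matrix.mul_smul, Matrix.mul_assoc]
      _ = star c • ((c • (kraus V₁ j * F)) * Fᴴ) := by rw [hbl j]
      _ = (star c * c) • (kraus V₁ j * (F * Fᴴ)) := by
          rw [Matrix.smul_mul, smul_smul, Matrix.mul_assoc]
      _ = kraus V₁ j * (F * Fᴴ) := by rw [hcc, one_smul]
  have hHpsd : (F * Fᴴ).PosSemidef := posSemidef_self_mul_conjTranspose F
  have hHne : (F * Fᴴ) ≠ 0 := fun h0 => hFne (self_mul_conjTranspose_eq_zero.mp h0)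
  obtain ⟨ν, hνpos, hHν⟩ := scalar_of_comm h₁ hHpsd hHne hHcomm
  have hd2 : 0 < d₂ := dim_pos h₂.2.1.2
  have hd1 : 0 < d₁ := dim_pos h₁.2.1.2
  have hrankG : (Fᴴ * F).rank = d₂ := by
    rw [hGμ]
    have hu : IsUnit ((μ : ℂ) • (1 : Matrix (Fin d₂) (Fin d₂) ℂ)) := by
      rw [Matrix.isUnit_iff_isUnit_det, Matrix.det_smul, Matrix.det_one, mul_one]
      exact isUnit_iff_ne_zero.mpr (pow_ne_zero _ (by exact_mod_cast hμpos.ne'))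
    rw [Matrix.rank_of_isUnit _ hu]
    simp
  have hrankH : (F * Fᴴ).rank = d₁ := by
    rw [hHν]
    have hu : IsUnit ((ν : ℂ) • (1 : Matrix (Fin d₁) (Fin d₁) ℂ)) := by
      rw [Matrix.isUnit_iff_isUnit_det, Matrix.det_smul, Matrix.det_one, mul_one]
      exact isUnit_iff_ne_zero.mpr (pow_ne_zero _ (by exact_mod_cast hνpos.ne'))
    rw [Matrix.rank_of_isUnit _ hu]
    simp
  have hle1 : d₂ ≤ d₁ := by
    have ha : (Fᴴ * F).rank ≤ (Fᴴ).rank := Matrix.rank_mul_le_left Fᴴ F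
    have hb : (Fᴴ).rank ≤ d₁ := Matrix.rank_le_width Fᴴ
    rw [hrankG] at ha
    exact ha.trans hb
  have hle2 : d₁ ≤ d₂ := by
    have ha : (F * Fᴴ).rank ≤ F.rank := Matrix.rank_mul_le_left F Fᴴ
    have hb : F.rank ≤ d₂ := Matrix.rank_le_width F
    rw [hrankH] at ha
    exact ha.trans hb
  have hd : d₁ = d₂ := le_antisymm hle2 hle1
  have hμν : (ν : ℂ) = (μ : ℂ) := by
    have h0 : (F * Fᴴ).trace = (Fᴴ * F).trace := trace_mul_comm F Fᴴ
    rw [hGμ, hHν, trace_smul, trace_smul, trace_one, trace_one] at h0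
    rw [Fintype.card_fin, Fintype.card_fin, ← hd] at h0
    have hdne : ((d₁ : ℕ) : ℂ) ≠ 0 := by exact_mod_cast hd1.ne'
    have := h0
    simp only [smul_eq_mul] at this
    exact mul_right_cancel₀ hdne this
  set r := Real.sqrt μ with hrdef
  have hrpos : 0 < r := Real.sqrt_pos.mpr hμpos
  have hrne : ((r : ℂ)) ≠ 0 := by exact_mod_cast hrpos.ne'
  have hr2 : (r : ℂ) * (r : ℂ) = (μ : ℂ) := by
    rw [← Complex.ofReal_mul, Real.mul_self_sqrt hμpos.le]
  set W := ((r : ℂ))⁻¹ • F with hWdef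
  have hWH : Wᴴ = ((r : ℂ))⁻¹ • Fᴴ := by
    rw [hWdef, conjTranspose_smul]
    congr 1
    simp [Complex.conj_ofReal]
  have hscal : ((r : ℂ))⁻¹ * ((r : ℂ))⁻¹ * (μ : ℂ) = 1 := by
    rw [← hr2]
    field_simp
  have hWHW : Wᴴ * W = 1 := by
    rw [hWH, hWdef, Matrix.smul_mul, Matrix.mul_smul, smul_smul, hGμ, smul_smul, hscal, one_smul]
  have hWWH : W * Wᴴ = 1 := by
    rw [hWH, hWdef, Matrix.smul_mul, Matrix.mul_smul, smul_smul, hHν, hμν, smul_smul, hscal,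
      one_smul]
  have hint : ∀ j, W * kraus V₂ j = c • (kraus V₁ j * W) := by
    intro j
    rw [hWdef, Matrix.smul_mul, hbl j, Matrix.mul_smul, smul_comm]
  have hKW : ∀ j, kraus V₁ j * W = star c • (W * kraus V₂ j) := by
    intro j
    rw [hint j, smul_smul, hcc, one_smul]
  have hWst : W * ρ₂ * Wᴴ = ρ₁ := by
    apply h₁.2.2.2.2
    · constructor
      · exact h₂.2.1.1.mul_mul_conjTranspose_same W
      · rw [trace_mul_cycle, hWHW, Matrix.one_mul]
        exact h₂.2.1.2
    · show (∑ j, kraus V₁ j * (W * ρ₂ * Wᴴ) * (kraus V₁ j)ᴴ) = W * ρ₂ * Wᴴ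
      have step : ∀ j, kraus V₁ j * (W * ρ₂ * Wᴴ) * (kraus V₁ j)ᴴ
          = W * (kraus V₂ j * ρ₂ * (kraus V₂ j)ᴴ) * Wᴴ := by
        intro j
        have e1 : kraus V₁ j * (W * ρ₂ * Wᴴ) * (kraus V₁ j)ᴴ
            = (kraus V₁ j * W) * ρ₂ * (kraus V₁ j * W)ᴴ := by
          rw [conjTranspose_mul]
          simp only [Matrix.mul_assoc]
        rw [e1, hKW j, conjTranspose_smul, star_star, Matrix.smul_mul, Matrix.smul_mul,
          Matrix.mul_smul, smul_smul, hcc, one_smul, conjTranspose_mul]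
        simp only [Matrix.mul_assoc]
      calc (∑ j, kraus V₁ j * (W * ρ₂ * Wᴴ) * (kraus V₁ j)ᴴ)
          = ∑ j, W * (kraus V₂ j * ρ₂ * (kraus V₂ j)ᴴ) * Wᴴ :=
            Finset.sum_congr rfl fun j _ => step j
        _ = W * (∑ j, kraus V₂ j * ρ₂ * (kraus V₂ j)ᴴ) * Wᴴ := by
            rw [Matrix.mul_sum, Matrix.sum_mul]
        _ = W * ρ₂ * Wᴴ := by
            rw [show (∑ j, kraus V₂ j * ρ₂ * (kraus V₂ j)ᴴ) = predual V₂ ρ₂ from rfl, h₂.2.2.1]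
  have hcommρ : W * ρ₂ = ρ₁ * W := by
    calc W * ρ₂ = W * ρ₂ * (Wᴴ * W) := by rw [hWHW, Matrix.mul_one]
      _ = (W * ρ₂ * Wᴴ) * W := by simp only [Matrix.mul_assoc]
      _ = ρ₁ * W := by rw [hWst]
  exact ⟨hd, W, ⟨hWHW, hWWH⟩, hint, hcommρ⟩


/-- Proposition: peripheral eigenvalues of `T₁₂`. -/
theorem chan12_peripheral_eigenvalue {d₁ d₂ k : ℕ}
    (V₁ : Matrix (Fin d₁ × Fin k) (Fin d₁) ℂ) (ρ₁ : Matrix (Fin d₁) (Fin d₁) ℂ)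
    (V₂ : Matrix (Fin d₂ × Fin k) (Fin d₂) ℂ) (ρ₂ : Matrix (Fin d₂) (Fin d₂) ℂ)
    (h₁ : IsIrreducible V₁ ρ₁) (h₂ : IsIrreducible V₂ ρ₂) :
    ((∃ (c : ℂ) (F : Matrix (Fin d₁) (Fin d₂) ℂ), ‖c‖ = 1 ∧ F ≠ 0 ∧
        chan12 V₁ V₂ F = c • F) ↔
      (d₁ = d₂ ∧ ∃ (W : Matrix (Fin d₁) (Fin d₂) ℂ) (c : ℂ), IsUnitaryMat W ∧
        ‖c‖ = 1 ∧ (∀ j : Fin k, W * kraus V₂ j = c • (kraus V₁ j * W)) ∧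
        W * ρ₂ = ρ₁ * W)) ∧
    ((∃ (c : ℂ) (F : Matrix (Fin d₁) (Fin d₂) ℂ), ‖c‖ = 1 ∧ F ≠ 0 ∧
        chan12 V₁ V₂ F = c • F) ↔
      (d₁ = d₂ ∧ ∃ (W : Matrix (Fin d₁) (Fin d₂) ℂ) (c : ℂ), IsUnitaryMat W ∧
        ‖c‖ = 1 ∧
        (W ⊗ₖ (1 : Matrix (Fin k) (Fin k) ℂ)) * V₂ = c • (V₁ * W))) ∧
    (∀ (W : Matrix (Fin d₁) (Fin d₂) ℂ) (c : ℂ), IsUnitaryMat W →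
      ((∀ j : Fin k, W * kraus V₂ j = c • (kraus V₁ j * W)) ∨
        (W ⊗ₖ (1 : Matrix (Fin k) (Fin k) ℂ)) * V₂ = c • (V₁ * W)) →
      chan12 V₁ V₂ W = c • W) := by
  have hd2 : 0 < d₂ := dim_pos h₂.2.1.2
  have partC : ∀ (W : Matrix (Fin d₁) (Fin d₂) ℂ) (c : ℂ),
      ((∀ j, W * kraus V₂ j = c • (kraus V₁ j * W)) ∨
        (W ⊗ₖ (1 : Matrix (Fin k) (Fin k) ℂ)) * V₂ = c • (V₁ * W)) →
      chan12 V₁ V₂ W = c • W := by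
    intro W c h
    have hkron : (W ⊗ₖ (1 : Matrix (Fin k) (Fin k) ℂ)) * V₂ = c • (V₁ * W) := by
      rcases h with h | h
      · exact (kron_eq_iff_blocks W V₁ V₂ c).mpr h
      · exact h
    show V₁ᴴ * (W ⊗ₖ (1 : Matrix (Fin k) (Fin k) ℂ)) * V₂ = c • W
    rw [Matrix.mul_assoc, hkron, Matrix.mul_smul, ← Matrix.mul_assoc, h₁.1, Matrix.one_mul]
  have Wne : ∀ (W : Matrix (Fin d₁) (Fin d₂) ℂ), IsUnitaryMat W → W ≠ 0 := by
    intro W hU h0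
    have h1 := hU.1
    rw [h0] at h1
    simp only [conjTranspose_zero, Matrix.mul_zero, Matrix.zero_mul] at h1
    have h3 := congrFun (congrFun h1 ⟨0, hd2⟩) ⟨0, hd2⟩
    simp [Matrix.one_apply] at h3
  have fwd : (∃ (c : ℂ) (F : Matrix (Fin d₁) (Fin d₂) ℂ), ‖c‖ = 1 ∧ F ≠ 0 ∧
      chan12 V₁ V₂ F = c • F) →
      (d₁ = d₂ ∧ ∃ (W : Matrix (Fin d₁) (Fin d₂) ℂ) (c : ℂ), IsUnitaryMat W ∧
        ‖c‖ = 1 ∧ (∀ j, W * kraus V₂ j = c • (kraus V₁ j * W)) ∧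
        W * ρ₂ = ρ₁ * W) := by
    rintro ⟨c, F, hc, hFne, hF⟩
    obtain ⟨hd, W, hU, hint, hρ⟩ := main_forward h₁ h₂ hc hFne hF
    exact ⟨hd, W, c, hU, hc, hint, hρ⟩
  refine ⟨⟨fwd, ?_⟩, ⟨?_, ?_⟩, fun W c hU h => partC W c h⟩
  · rintro ⟨hd, W, c, hU, hc, hint, hρ⟩
    exact ⟨c, W, hc, Wne W hU, partC W c (Or.inl hint)⟩
  · intro h
    obtain ⟨hd, W, c, hU, hc, hint, hρ⟩ := fwd h
    exact ⟨hd, W, c, hU, hc, (kron_eq_iff_blocks W V₁ V₂ c).mpr hint⟩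
  · rintro ⟨hd, W, c, hU, hc, hkron⟩
    exact ⟨c, W, hc, Wne W hU, partC W c (Or.inr hkron)⟩


end QMCPaper
end
end

section
/- Let V be an isometry defining an irreducible quantum Markov chain with system dimension d and environment dimension k, with stationary state ρˢˢ, and let ρˢˢ = Σ_{m=1}^{d} π_m φ_m φ_mᴴ be a spectral decomposition with (φ_m) an orthonormal basis of ℂ^d and π_m ≥ 0. For each n define the vectors ψ_{mp}(n) ∈ ℂ^{kⁿ} with components ψ_{mp}(n)_i = ⟨φ_m, K_i φ_p⟩ for words i of length n. Then: (a) the stationary output state satisfies ρ_V^out(n) = Σ_{m,p=1}^{d} π_p ψ_{mp}(n) ψ_{mp}(n)ᴴ; (b) for every n, the rank of ρ_V^out(n) is at most d², and consequently tr((ρ_V^out(n))²) ≥ d^{−2}. -/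
open Matrix Filter
open scoped Kronecker ComplexConjugate ComplexOrder

noncomputable section

namespace QMCPaper

/-- The vector `ψ_{mp}(n) ∈ ℂ^{kⁿ}` with components `⟨φ_m, K_i φ_p⟩`. -/
def psiVec {d k : ℕ} (V : Matrix (Fin d × Fin k) (Fin d) ℂ)
    (φ : Fin d → Fin d → ℂ) (n : ℕ) (m p : Fin d) : (Fin n → Fin k) → ℂ :=
  fun i => star (φ m) ⬝ᵥ (krausWord V i *ᵥ φ p)

section Helpers

variable {d k : ℕ} (V : Matrix (Fin d × Fin k) (Fin d) ℂ)

lemma krausWord_zero' (i : Fin 0 → Fin k) : krausWord V i = 1 := by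
  simp [krausWord]

lemma krausWord_cons' {n : ℕ} (a : Fin k) (t : Fin n → Fin k) :
    krausWord V (Fin.cons a t) = krausWord V t * kraus V a := by
  simp [krausWord, List.ofFn_succ, Fin.cons_succ, List.reverse_cons, List.map_append,
    List.prod_append]

lemma sum_krausWord_conj' (ρ : Matrix (Fin d) (Fin d) ℂ) : ∀ (n : ℕ),
    ∑ i : Fin n → Fin k, krausWord V i * ρ * (krausWord V i)ᴴ = (predual V)^[n] ρ := by
  intro n
  induction n generalizing ρ with
  | zero =>
      simp [krausWord_zero']
  | succ n ih =>
      rw [Function.iterate_succ_apply, ← ih (predual V ρ)]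
      rw [← (Fintype.sum_equiv (Fin.consEquiv (fun _ : Fin (n+1) => Fin k))
        (fun p => krausWord V (Fin.cons p.1 p.2) * ρ * (krausWord V (Fin.cons p.1 p.2))ᴴ)
        (fun i => krausWord V i * ρ * (krausWord V i)ᴴ) (fun p => rfl))]
      rw [Fintype.sum_prod_type]
      rw [Finset.sum_comm]
      refine Finset.sum_congr rfl fun t _ => ?_
      simp only [krausWord_cons', conjTranspose_mul, predual, Finset.mul_sum, Finset.sum_mul]
      refine Finset.sum_congr rfl fun a _ => ?_
      noncomm_ring

lemma resolution' (φ : Fin d → Fin d → ℂ)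
    (hon : ∀ m p, star (φ m) ⬝ᵥ φ p = if m = p then (1:ℂ) else 0) (a b : Fin d) :
    ∑ m, star (φ m a) * φ m b = if a = b then (1:ℂ) else 0 := by
  let U : Matrix (Fin d) (Fin d) ℂ := Matrix.of fun a m => φ m a
  have hU : Uᴴ * U = 1 := by
    ext m p
    have := hon m p
    simpa [U, Matrix.mul_apply, Matrix.one_apply, dotProduct, conjTranspose_apply] using this
  have hU2 : U * Uᴴ = 1 := mul_eq_one_comm.mp hU
  have h3 : (U * Uᴴ) b a = (1 : Matrix (Fin d) (Fin d) ℂ) b a := by rw [hU2]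
  have h4 : ∑ m, φ m b * star (φ m a) = if b = a then (1:ℂ) else 0 := by
    simpa [U, Matrix.mul_apply, Matrix.one_apply, conjTranspose_apply] using h3
  calc ∑ m, star (φ m a) * φ m b = ∑ m, φ m b * star (φ m a) := by
        exact Finset.sum_congr rfl fun m _ => mul_comm _ _
    _ = if a = b then (1:ℂ) else 0 := by rw [h4]; by_cases hab : a = b <;> simp [hab, eq_comm]

lemma complete_expand' (φ : Fin d → Fin d → ℂ)
    (hon : ∀ m p, star (φ m) ⬝ᵥ φ p = if m = p then (1:ℂ) else 0) (x y : Fin d → ℂ) :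
    ∑ a, x a * star (y a) = ∑ m, (star (φ m) ⬝ᵥ x) * star (star (φ m) ⬝ᵥ y) := by
  have step : ∀ m, (star (φ m) ⬝ᵥ x) * star (star (φ m) ⬝ᵥ y)
      = ∑ a, ∑ b, (x b * star (y a)) * (star (φ m b) * φ m a) := by
    intro m
    simp only [dotProduct, Pi.star_apply, star_sum, star_mul', star_star, Finset.sum_mul,
      Finset.mul_sum]
    refine Finset.sum_congr rfl fun a _ => Finset.sum_congr rfl fun b _ => by ring
  rw [Finset.sum_congr rfl fun m _ => step m, Finset.sum_comm]
  refine Finset.sum_congr rfl fun a _ => ?_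
  rw [Finset.sum_comm]
  have : ∀ b, ∑ m, (x b * star (y a)) * (star (φ m b) * φ m a)
      = (x b * star (y a)) * (if b = a then (1:ℂ) else 0) := by
    intro b
    rw [← Finset.mul_sum, resolution' φ hon b a]
  rw [Finset.sum_congr rfl fun b _ => this b]
  simp

lemma trace_mul_vecMulVec_mul' (A B : Matrix (Fin d) (Fin d) ℂ) (u : Fin d → ℂ) :
    (A * Matrix.vecMulVec u (star u) * Bᴴ).trace
      = ∑ a, (A *ᵥ u) a * star ((B *ᵥ u) a) := by
  have h1 : A * Matrix.vecMulVec u (star u) = Matrix.vecMulVec (A *ᵥ u) (star u) := by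
    ext a b
    simp [Matrix.vecMulVec_apply, Matrix.mul_apply, Matrix.mulVec, dotProduct,
      Finset.sum_mul, mul_assoc]
  have h2 : Matrix.vecMulVec (A *ᵥ u) (star u) * Bᴴ
      = Matrix.vecMulVec (A *ᵥ u) (star (B *ᵥ u)) := by
    ext a c
    simp only [Matrix.vecMulVec_apply, Matrix.mul_apply, Matrix.conjTranspose_apply,
      Pi.star_apply, Matrix.mulVec, dotProduct, star_sum, star_mul', Finset.mul_sum]
    refine Finset.sum_congr rfl fun b _ => by ring
  rw [h1, h2]
  simp [Matrix.trace, Matrix.diag, Matrix.vecMulVec_apply]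

end Helpers

/-- Lemma: structure of the stationary output state. -/
theorem outState_structure {d k : ℕ}
    (V : Matrix (Fin d × Fin k) (Fin d) ℂ) (ρss : Matrix (Fin d) (Fin d) ℂ)
    (h : IsIrreducible V ρss)
    (π : Fin d → ℝ) (φ : Fin d → Fin d → ℂ)
    (hπ : ∀ m, 0 ≤ π m)
    (hon : ∀ m p, star (φ m) ⬝ᵥ φ p = if m = p then (1 : ℂ) else 0)
    (hdecomp : ρss = ∑ m, (π m : ℂ) • Matrix.vecMulVec (φ m) (star (φ m))) :
    (∀ n : ℕ, outState V ρss n =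
        ∑ m, ∑ p, (π p : ℂ) •
          Matrix.vecMulVec (psiVec V φ n m p) (star (psiVec V φ n m p))) ∧
    (∀ n : ℕ, (outState V ρss n).rank ≤ d ^ 2) ∧
    (∀ n : ℕ, ((d : ℝ) ^ 2)⁻¹ ≤ ((outState V ρss n * outState V ρss n).trace).re) := by
  obtain ⟨hiso, hstate, hfix, hpd, huniq⟩ := h
  -- entrywise formula
  have key : ∀ (n : ℕ) (i j : Fin n → Fin k),
      outState V ρss n i j
        = ∑ m, ∑ p, (π p : ℂ) * (psiVec V φ n m p i * star (psiVec V φ n m p j)) := by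
    intro n i j
    have e1 : outState V ρss n i j
        = ∑ p, (π p : ℂ) *
            (krausWord V i * Matrix.vecMulVec (φ p) (star (φ p)) * (krausWord V j)ᴴ).trace := by
      show (krausWord V i * ρss * (krausWord V j)ᴴ).trace = _
      conv_lhs => rw [hdecomp]
      simp [Finset.mul_sum, Finset.sum_mul, Matrix.trace_sum, Matrix.mul_smul,
        Matrix.smul_mul, Matrix.trace_smul, smul_eq_mul]
    rw [e1]
    conv_rhs => rw [Finset.sum_comm]
    refine Finset.sum_congr rfl fun p _ => ?_
    rw [trace_mul_vecMulVec_mul', complete_expand' φ hon, Finset.mul_sum]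
    rfl
  -- part (a)
  have parta : ∀ n : ℕ, outState V ρss n =
      ∑ m, ∑ p, (π p : ℂ) •
        Matrix.vecMulVec (psiVec V φ n m p) (star (psiVec V φ n m p)) := by
    intro n
    ext i j
    rw [key n i j]
    simp [Matrix.sum_apply, Matrix.smul_apply, Matrix.vecMulVec_apply, smul_eq_mul,
      Pi.star_apply, mul_assoc]
  -- the factorization ρout = M Mᴴ
  have hM : ∀ n : ℕ, outState V ρss n =
      (Matrix.of fun i (mp : Fin d × Fin d) =>
        ((Real.sqrt (π mp.2) : ℝ) : ℂ) * psiVec V φ n mp.1 mp.2 i) *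
      (Matrix.of fun i (mp : Fin d × Fin d) =>
        ((Real.sqrt (π mp.2) : ℝ) : ℂ) * psiVec V φ n mp.1 mp.2 i)ᴴ := by
    intro n
    ext i j
    rw [key n i j]
    simp only [Matrix.mul_apply, Matrix.conjTranspose_apply, Matrix.of_apply,
      Fintype.sum_prod_type, star_mul', Complex.star_def, Complex.conj_ofReal]
    refine Finset.sum_congr rfl fun m _ => Finset.sum_congr rfl fun p _ => ?_
    have hs : ((Real.sqrt (π p) : ℝ) : ℂ) * ((Real.sqrt (π p) : ℝ) : ℂ) = ((π p : ℝ) : ℂ) := by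
      rw [← Complex.ofReal_mul, Real.mul_self_sqrt (hπ p)]
    linear_combination (-(psiVec V φ n m p i * (starRingEnd ℂ) (psiVec V φ n m p j))) * hs
  -- trace of the output state is 1
  have hiter : ∀ n : ℕ, (predual V)^[n] ρss = ρss := by
    intro n
    induction n with
    | zero => rfl
    | succ n ih => rw [Function.iterate_succ_apply, hfix, ih]
  have htr : ∀ n : ℕ, (outState V ρss n).trace = 1 := by
    intro n
    have e : (outState V ρss n).trace
        = ∑ i : Fin n → Fin k, (krausWord V i * ρss * (krausWord V i)ᴴ).trace := rfl
    rw [e, ← Matrix.trace_sum, sum_krausWord_conj', hiter n, hstate.2]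
  refine ⟨parta, ?_, ?_⟩
  · -- rank bound
    intro n
    rw [hM n]
    calc ((Matrix.of fun i (mp : Fin d × Fin d) =>
            ((Real.sqrt (π mp.2) : ℝ) : ℂ) * psiVec V φ n mp.1 mp.2 i) *
          (Matrix.of fun i (mp : Fin d × Fin d) =>
            ((Real.sqrt (π mp.2) : ℝ) : ℂ) * psiVec V φ n mp.1 mp.2 i)ᴴ).rank
        ≤ (Matrix.of fun i (mp : Fin d × Fin d) =>
            ((Real.sqrt (π mp.2) : ℝ) : ℂ) * psiVec V φ n mp.1 mp.2 i).rank :=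
          Matrix.rank_mul_le_left _ _
      _ ≤ Fintype.card (Fin d × Fin d) := Matrix.rank_le_card_width _
      _ = d ^ 2 := by simp [sq]
  · -- purity bound
    intro n
    set M : Matrix (Fin n → Fin k) (Fin d × Fin d) ℂ :=
      Matrix.of fun i (mp : Fin d × Fin d) =>
        ((Real.sqrt (π mp.2) : ℝ) : ℂ) * psiVec V φ n mp.1 mp.2 i with hMdef
    have hd : 0 < d := by
      rcases Nat.eq_zero_or_pos d with hd0 | hd
      · exfalso
        have h2 := hstate.2
        subst hd0
        simp [Matrix.trace] at h2
      · exact hd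
    set G : Matrix (Fin d × Fin d) (Fin d × Fin d) ℂ := Mᴴ * M with hGdef
    have hGtr : G.trace = 1 := by
      rw [hGdef, Matrix.trace_mul_comm, ← hM n, htr n]
    have hherm : Gᴴ = G := by
      rw [hGdef]
      simp [Matrix.conjTranspose_mul]
    have hsq : (outState V ρss n * outState V ρss n).trace = (G * G).trace := by
      rw [hM n]
      conv_lhs => rw [Matrix.mul_assoc]
      rw [Matrix.trace_mul_comm]
      rw [hGdef]
      simp only [Matrix.mul_assoc]
      rfl
    have hc : ∀ α β, G α β = (starRingEnd ℂ) (G β α) := by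
      intro α β
      conv_lhs => rw [← hherm]
      rfl
    have htrG2 : (G * G).trace = ∑ α, ∑ β, (Complex.normSq (G β α) : ℂ) := by
      simp only [Matrix.trace, Matrix.diag, Matrix.mul_apply]
      refine Finset.sum_congr rfl fun α _ => Finset.sum_congr rfl fun β _ => ?_
      rw [hc α β, mul_comm, Complex.mul_conj]
    have hre : ((G * G).trace).re = ∑ α, ∑ β, Complex.normSq (G β α) := by
      rw [htrG2]
      rw [show (∑ α, ∑ β, (Complex.normSq (G β α) : ℂ))
          = ((∑ α, ∑ β, Complex.normSq (G β α) : ℝ) : ℂ) by push_cast; ring]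
      exact Complex.ofReal_re _
    have hdiag : ∑ α, (G α α).re = 1 := by
      have h1 := congrArg Complex.re hGtr
      simpa [Matrix.trace, Matrix.diag, Complex.re_sum] using h1
    have hCS : (∑ α, (G α α).re) ^ 2
        ≤ (Fintype.card (Fin d × Fin d) : ℝ) * ∑ α, ((G α α).re) ^ 2 := by
      simpa using sq_sum_le_card_mul_sum_sq (s := (Finset.univ : Finset (Fin d × Fin d)))
        (f := fun α => (G α α).re)
    have h2 : ∑ α, ((G α α).re) ^ 2 ≤ ∑ α, Complex.normSq (G α α) := by
      refine Finset.sum_le_sum fun α _ => ?_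
      rw [Complex.normSq_apply]
      nlinarith [sq_nonneg ((G α α).im)]
    have h3 : ∑ α, Complex.normSq (G α α) ≤ ∑ α, ∑ β, Complex.normSq (G β α) := by
      refine Finset.sum_le_sum fun α _ => ?_
      exact Finset.single_le_sum (f := fun β => Complex.normSq (G β α))
        (fun β _ => Complex.normSq_nonneg _) (Finset.mem_univ α)
    have hcard : (Fintype.card (Fin d × Fin d) : ℝ) = (d : ℝ) ^ 2 := by
      simp [sq]
    have hd2 : (0 : ℝ) < (d : ℝ) ^ 2 := by positivity
    have hfinal : 1 ≤ (d : ℝ) ^ 2 * ((outState V ρss n * outState V ρss n).trace).re := by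
      have := hCS
      rw [hdiag, hcard] at this
      have hch : ((outState V ρss n * outState V ρss n).trace).re
          = ∑ α, ∑ β, Complex.normSq (G β α) := by rw [hsq, hre]
      rw [hch]
      nlinarith [h2, h3, this]
    have hinv : (d : ℝ) ^ 2 * ((d : ℝ) ^ 2)⁻¹ = 1 := mul_inv_cancel₀ (ne_of_gt hd2)
    nlinarith [hfinal, hd2, hinv]


end QMCPaper
end
end
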